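/- For all integers m, n ≥ 3 and k ≥ 1, γ_{[k]R}(C_m □ C_n) ≥ (k+1)·mn/5. -/

import Mathlib

open SimpleGraph Finset
open scoped Classical

/-- Closed neighborhood of a vertex. -/
def closedNbr {V : Type*} (G : SimpleGraph V) (v : V) : Set V :=
  insert v (G.neighborSet v)

/-- `S` is an efficient dominating set: every vertex lies in the closed
neighborhood of exactly one vertex of `S`. -/
def IsEffDomSet {V : Type*} (G : SimpleGraph V) (S : Set V) : Prop :=
  ∀ v : V, ∃! u, u ∈ S ∧ v ∈ closedNbr G u

/-- `S` is a dominating set. -/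
def IsDomSet {V : Type*} (G : SimpleGraph V) (S : Set V) : Prop :=
  ∀ v : V, v ∉ S → ∃ u ∈ S, G.Adj u v

/-- The domination number. -/
noncomputable def domNumber {V : Type*} (G : SimpleGraph V) [Fintype V] : ℕ :=
  sInf {n | ∃ S : Set V, IsDomSet G S ∧ S.ncard = n}

/-- `f` is a `[k]`-Roman dominating function on `G`. -/
noncomputable def IsKRDF {V : Type*} (G : SimpleGraph V) [Fintype V] (k : ℕ) (f : V → ℕ) : Prop :=
  (∀ v, f v ≤ k + 1) ∧
  ∀ v : V, f v < k →
    f v + ∑ u ∈ univ.filter (fun u => G.Adj v u), f u ≥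
      k + (univ.filter (fun u => G.Adj v u ∧ 0 < f u)).card

/-- The `[k]`-Roman domination number. -/
noncomputable def kRoman {V : Type*} (G : SimpleGraph V) [Fintype V] (k : ℕ) : ℕ :=
  sInf {w | ∃ f : V → ℕ, IsKRDF G k f ∧ ∑ v, f v = w}

/-- `S` is a packing: closed neighborhoods of vertices in `S` are pairwise disjoint. -/
def IsPacking {V : Type*} (G : SimpleGraph V) (S : Set V) : Prop :=
  S.Pairwise fun u v => Disjoint (closedNbr G u) (closedNbr G v)

/-- The packing number. -/
noncomputable def packingNumber {V : Type*} (G : SimpleGraph V) [Fintype V] : ℕ :=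
  sSup {n | ∃ S : Set V, IsPacking G S ∧ S.ncard = n}


section KRomanLB

variable {V : Type*} [Fintype V]

/-- weight of closed neighborhood -/
noncomputable def gw (G : SimpleGraph V) (f : V → ℕ) (v : V) : ℕ :=
  f v + ∑ u ∈ univ.filter (fun u => G.Adj v u), f u

lemma gw_def (G : SimpleGraph V) (f : V → ℕ) (v : V) :
    gw G f v = f v + ∑ u ∈ univ.filter (fun u => G.Adj v u), f u := rfl

/-- a vertex is bad if its closed neighborhood weight is at most k -/
def badv (G : SimpleGraph V) (k : ℕ) (f : V → ℕ) (v : V) : Prop :=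
  gw G f v ≤ k

lemma gw_ge (G : SimpleGraph V) {k : ℕ} {f : V → ℕ} (hf : IsKRDF G k f) (v : V) :
    k ≤ gw G f v := by
  by_cases h : f v < k
  · have h2 := hf.2 v h
    rw [gw_def]
    omega
  · rw [gw_def]
    omega

lemma badv_eq (G : SimpleGraph V) {k : ℕ} {f : V → ℕ} (hk : 1 ≤ k) (hf : IsKRDF G k f)
    (v : V) (hb : badv G k f v) :
    f v = k ∧ ∀ u, G.Adj v u → f u = 0 := by
  have hg := gw_ge G hf v
  rw [badv, gw_def] at hb
  rw [gw_def] at hg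
  have hfk : k ≤ f v := by
    by_contra h
    push_neg at h
    have h2 := hf.2 v h
    have ha : (univ.filter (fun u => G.Adj v u ∧ 0 < f u)).card = 0 := by omega
    have hz : ∀ u, G.Adj v u → f u = 0 := by
      intro u hu
      by_contra hne
      have hmem : u ∈ univ.filter (fun u => G.Adj v u ∧ 0 < f u) := by
        simp only [Finset.mem_filter, Finset.mem_univ, true_and]
        exact ⟨hu, Nat.pos_of_ne_zero hne⟩
      rw [Finset.card_eq_zero.mp ha] at hmem
      exact absurd hmem (Finset.notMem_empty u)
    have hs : ∑ u ∈ univ.filter (fun u => G.Adj v u), f u = 0 :=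
      Finset.sum_eq_zero (fun u hu => hz u (by simpa using hu))
    omega
  have hsum0 : ∑ u ∈ univ.filter (fun u => G.Adj v u), f u = 0 := by omega
  refine ⟨by omega, fun u hu => ?_⟩
  have := (Finset.sum_eq_zero_iff).mp hsum0 u (by simp [hu])
  exact this

lemma perv (G : SimpleGraph V)
    (hreg : ∀ (v : V) (inst : ∀ u, Decidable (G.Adj v u)),
      (@Finset.filter _ (fun u => G.Adj v u) inst univ).card = 4)
    {k : ℕ} {f : V → ℕ} (hk : 1 ≤ k) (hf : IsKRDF G k f) (v : V) :
    4 * (k + 1) + (univ.filter (fun u => G.Adj v u ∧ badv G k f u)).card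
      ≤ 4 * gw G f v + (if badv G k f v then 4 else 0) := by
  by_cases hb : badv G k f v
  · have h2 := badv_eq G hk hf v hb
    have ht : (univ.filter (fun u => G.Adj v u ∧ badv G k f u)).card = 0 := by
      rw [Finset.card_eq_zero, Finset.filter_eq_empty_iff]
      rintro u - ⟨hadj, hbu⟩
      have h0 := h2.2 u hadj
      have hk' := (badv_eq G hk hf u hbu).1
      omega
    have hgv : gw G f v = k := le_antisymm hb (gw_ge G hf v)
    rw [if_pos hb, ht, hgv]
    omega
  · rw [if_neg hb]
    set t := (univ.filter (fun u => G.Adj v u ∧ badv G k f u)).card with hT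
    have hg1 : k + 1 ≤ gw G f v := by
      have := gw_ge G hf v
      rw [badv] at hb
      omega
    by_cases ht0 : t = 0
    · omega
    · have hpos : 0 < (univ.filter (fun u => G.Adj v u ∧ badv G k f u)).card := by omega
      obtain ⟨b, hbmem⟩ := Finset.card_pos.mp hpos
      rw [Finset.mem_filter] at hbmem
      obtain ⟨-, hadj, hbbad⟩ := hbmem
      have hfv0 : f v = 0 := (badv_eq G hk hf b hbbad).2 v (G.adj_symm hadj)
      have hlt : f v < k := by omega
      have hcond := hf.2 v hlt
      set a := (univ.filter (fun u => G.Adj v u ∧ 0 < f u)).card with hA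
      have hsub : univ.filter (fun u => G.Adj v u ∧ badv G k f u)
          ⊆ univ.filter (fun u => G.Adj v u ∧ 0 < f u) := by
        intro u hu
        rw [Finset.mem_filter] at hu ⊢
        refine ⟨hu.1, hu.2.1, ?_⟩
        have := (badv_eq G hk hf u hu.2.2).1
        omega
      have hta : t ≤ a := by
        rw [hT, hA]
        exact Finset.card_le_card hsub
      have ht4 : t ≤ 4 := by
        rw [hT, ← hreg v (fun u => Classical.propDecidable _)]
        exact Finset.card_le_card (fun u hu => by
          rw [Finset.mem_filter] at hu ⊢
          exact ⟨hu.1, hu.2.1⟩)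
      by_cases heq : a = t
      · have hset : univ.filter (fun u => G.Adj v u ∧ badv G k f u)
            = univ.filter (fun u => G.Adj v u ∧ 0 < f u) :=
          Finset.eq_of_subset_of_card_le hsub (by omega)
        have hsum : ∑ u ∈ univ.filter (fun u => G.Adj v u), f u = t * k := by
          have h1 : ∑ u ∈ univ.filter (fun u => G.Adj v u ∧ 0 < f u), f u
              = ∑ u ∈ univ.filter (fun u => G.Adj v u), f u := by
            rw [← Finset.filter_filter]
            exact Finset.sum_filter_of_ne (fun x _ hx => Nat.pos_of_ne_zero hx)
          rw [← h1, ← hset]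
          calc ∑ u ∈ univ.filter (fun u => G.Adj v u ∧ badv G k f u), f u
              = ∑ _u ∈ univ.filter (fun u => G.Adj v u ∧ badv G k f u), k :=
                Finset.sum_congr rfl (fun u hu =>
                  (badv_eq G hk hf u (Finset.mem_filter.mp hu).2.2).1)
            _ = t * k := by rw [Finset.sum_const, smul_eq_mul, hT]
        have hgw : gw G f v = t * k := by rw [gw_def, hfv0, hsum]; ring
        have h1 : k + t ≤ t * k := by
          rw [hfv0, hsum, heq] at hcond
          simpa using hcond
        have h2 : 2 ≤ t := by
          by_contra hlt2
          push_neg at hlt2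
          have : t = 1 := by omega
          rw [this] at h1
          omega
        have key : 4 * (k + 1) + t ≤ 4 * (t * k) := by
          calc 4 * (k + 1) + t ≤ 4 * (k + t) := by omega
            _ ≤ 4 * (t * k) := Nat.mul_le_mul_left 4 h1
        rw [hgw]
        simpa using key
      · have hta1 : t + 1 ≤ a := by omega
        have hgw : k + a ≤ gw G f v := by
          rw [gw_def]
          omega
        omega

lemma sum_gw (G : SimpleGraph V)
    (hreg : ∀ (v : V) (inst : ∀ u, Decidable (G.Adj v u)),
      (@Finset.filter _ (fun u => G.Adj v u) inst univ).card = 4)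
    (f : V → ℕ) : ∑ v, gw G f v = 5 * ∑ v, f v := by
  have h : ∑ v : V, ∑ u ∈ univ.filter (fun u => G.Adj v u), f u = 4 * ∑ v, f v := by
    calc ∑ v : V, ∑ u ∈ univ.filter (fun u => G.Adj v u), f u
        = ∑ v : V, ∑ u : V, if G.Adj v u then f u else 0 := by
          simp [Finset.sum_filter]
      _ = ∑ u : V, ∑ v : V, if G.Adj v u then f u else 0 := Finset.sum_comm
      _ = ∑ u : V, 4 * f u := by
          refine Finset.sum_congr rfl fun u _ => ?_
          rw [← Finset.sum_filter, Finset.sum_const, smul_eq_mul]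
          congr 1
          have : (univ.filter (fun v => G.Adj v u)) = (univ.filter (fun v => G.Adj u v)) := by
            ext v
            simp [G.adj_comm]
          rw [this, hreg u (fun v => Classical.propDecidable _)]
      _ = 4 * ∑ u, f u := by rw [Finset.mul_sum]
  simp only [gw_def, Finset.sum_add_distrib, h]
  ring

lemma sum_bad (G : SimpleGraph V)
    (hreg : ∀ (v : V) (inst : ∀ u, Decidable (G.Adj v u)),
      (@Finset.filter _ (fun u => G.Adj v u) inst univ).card = 4)
    (k : ℕ) (f : V → ℕ) :
    ∑ v : V, (univ.filter (fun u => G.Adj v u ∧ badv G k f u)).card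
      = ∑ v : V, (if badv G k f v then 4 else 0) := by
  calc ∑ v : V, (univ.filter (fun u => G.Adj v u ∧ badv G k f u)).card
      = ∑ v : V, ∑ u : V, if G.Adj v u ∧ badv G k f u then 1 else 0 := by
        refine Finset.sum_congr rfl fun v _ => ?_
        rw [Finset.card_filter]
    _ = ∑ u : V, ∑ v : V, if G.Adj v u ∧ badv G k f u then 1 else 0 := Finset.sum_comm
    _ = ∑ u : V, (if badv G k f u then 4 else 0) := by
        refine Finset.sum_congr rfl fun u _ => ?_
        by_cases hbu : badv G k f u
        · rw [if_pos hbu]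
          have h1 : ∀ v : V, (if G.Adj v u ∧ badv G k f u then (1:ℕ) else 0)
              = if G.Adj u v then 1 else 0 := by
            intro v
            rw [G.adj_comm]
            by_cases h : G.Adj u v <;> simp [h, hbu]
          rw [Finset.sum_congr rfl (fun v _ => h1 v), ← Finset.sum_filter,
            Finset.sum_const, smul_eq_mul, mul_one,
            hreg u (fun v => Classical.propDecidable _)]
        · rw [if_neg hbu]
          exact Finset.sum_eq_zero (fun v _ => by simp [hbu])

lemma kRDF_lower_bound (G : SimpleGraph V)
    (hreg : ∀ (v : V) (inst : ∀ u, Decidable (G.Adj v u)),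
      (@Finset.filter _ (fun u => G.Adj v u) inst univ).card = 4)
    {k : ℕ} {f : V → ℕ} (hk : 1 ≤ k) (hf : IsKRDF G k f) :
    (k + 1) * Fintype.card V ≤ 5 * ∑ v, f v := by
  have hsum : ∑ v : V, (4 * (k + 1) + (univ.filter (fun u => G.Adj v u ∧ badv G k f u)).card)
      ≤ ∑ v : V, (4 * gw G f v + (if badv G k f v then 4 else 0)) :=
    Finset.sum_le_sum (fun v _ => perv G hreg hk hf v)
  rw [Finset.sum_add_distrib, Finset.sum_add_distrib, sum_bad G hreg k f,
    Finset.sum_const, ← Finset.mul_sum, sum_gw G hreg f] at hsum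
  simp only [smul_eq_mul, Finset.card_univ] at hsum
  have hd : Fintype.card V * (4 * (k + 1)) = 4 * ((k + 1) * Fintype.card V) := by ring
  rw [hd] at hsum
  linarith

end KRomanLB

theorem stmt8 (m n k : ℕ) (hm : 3 ≤ m) (hn : 3 ≤ n) (hk : 1 ≤ k) :
    (kRoman ((cycleGraph m).boxProd (cycleGraph n)) k : ℚ) ≥ (k + 1) * m * n / 5 := by
  classical
  obtain ⟨m', rfl⟩ : ∃ m', m = m' + 3 := ⟨m - 3, by omega⟩
  obtain ⟨n', rfl⟩ : ∃ n', n = n' + 3 := ⟨n - 3, by omega⟩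
  set G := (cycleGraph (m' + 3)).boxProd (cycleGraph (n' + 3)) with hG
  have hreg : ∀ (v : Fin (m' + 3) × Fin (n' + 3)) (inst : ∀ u, Decidable (G.Adj v u)),
      (@Finset.filter _ (fun u => G.Adj v u) inst univ).card = 4 := by
    intro v inst
    have hfe : (@Finset.filter _ (fun u => G.Adj v u) inst univ) = G.neighborFinset v := by
      ext u
      simp [Finset.mem_filter, mem_neighborFinset]
    rw [hfe]
    have hdd : (G.neighborFinset v).card = G.degree v := rfl
    rw [hdd]
    show ((cycleGraph (m' + 3)).boxProd (cycleGraph (n' + 3))).degree v = 4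
    rw [SimpleGraph.degree_boxProd]
    have h1 : (cycleGraph (m' + 3)).degree v.1 = 2 := cycleGraph_degree_three_le
    have h2 : (cycleGraph (n' + 3)).degree v.2 = 2 := cycleGraph_degree_three_le
    rw [h1, h2]
  have hne : {w | ∃ f : Fin (m' + 3) × Fin (n' + 3) → ℕ, IsKRDF G k f ∧ ∑ v, f v = w}.Nonempty :=
    ⟨∑ _v : Fin (m' + 3) × Fin (n' + 3), (k + 1),
      fun _ => k + 1,
      ⟨fun v => le_refl _, fun v hv => absurd hv (Nat.not_lt.mpr (Nat.le_succ k))⟩, rfl⟩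
  obtain ⟨f, hf, hw⟩ := Nat.sInf_mem hne
  have hbound := kRDF_lower_bound G hreg hk hf
  have hcard : Fintype.card (Fin (m' + 3) × Fin (n' + 3)) = (m' + 3) * (n' + 3) := by
    simp [Fintype.card_prod]
  rw [hcard] at hbound
  have hkr : kRoman G k = ∑ v, f v := hw.symm
  rw [ge_iff_le, div_le_iff₀ (by norm_num : (0:ℚ) < 5), hkr]
  calc ((k : ℚ) + 1) * (↑(m' + 3)) * (↑(n' + 3))
      = (((k + 1) * ((m' + 3) * (n' + 3)) : ℕ) : ℚ) := by push_cast; ring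
    _ ≤ ((5 * ∑ v, f v : ℕ) : ℚ) := by exact_mod_cast hbound
    _ = (↑(∑ v, f v)) * 5 := by push_cast; ring
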